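/- Let s ∈ R and let M = (R^4, g) with g(∂x_1,∂x_3)=g(∂x_2,∂x_4)=1, g(∂x_3,∂x_4)=s(x_2^2-x_1^2)/2, g(∂x_3,∂x_3)=s x_1 x_2, g(∂x_4,∂x_4)=-s x_1 x_2. Then the Ricci operator rho satisfies rho(∂x_1) = -s∂x_2, rho(∂x_2) = s∂x_1, rho(∂x_3) = s∂x_4, rho(∂x_4) = -s∂x_3; in particular rho^2 = -s^2 · id, so for s = 1 the Ricci operator defines an almost complex structure. -/

import Mathlib

noncomputable section

open Finset in
/-- Partial derivative in the `i`-th coordinate direction. -/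
def pd {ι : Type*} [Fintype ι] [DecidableEq ι]
    (i : ι) (f : (ι → ℝ) → ℝ) (p : ι → ℝ) : ℝ :=
  fderiv ℝ f p (Pi.single i 1)

/-- Christoffel symbols of the second kind `Γ^k_{ij}` of the metric `g`
(with inverse metric `ginv`). -/
def christoffel {ι : Type*} [Fintype ι] [DecidableEq ι]
    (g ginv : (ι → ℝ) → Matrix ι ι ℝ) (k i j : ι) (p : ι → ℝ) : ℝ :=
  (1 / 2) * ∑ l, ginv p k l *
    (pd i (fun q => g q j l) p + pd j (fun q => g q i l) p - pd l (fun q => g q i j) p)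

/-- Components of the curvature operator of the Levi-Civita connection:
`R(∂_i,∂_j)∂_k = ∑_l (curvOp g ginv i j k l) ∂_l`. -/
def curvOp {ι : Type*} [Fintype ι] [DecidableEq ι]
    (g ginv : (ι → ℝ) → Matrix ι ι ℝ) (i j k l : ι) (p : ι → ℝ) : ℝ :=
  pd i (christoffel g ginv l j k) p - pd j (christoffel g ginv l i k) p
    + ∑ m, christoffel g ginv l i m p * christoffel g ginv m j k p
    - ∑ m, christoffel g ginv l j m p * christoffel g ginv m i k p

/-- The curvature operator extended multilinearly to tangent vectors:
component `l` of `R(v,w)u`. -/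
def curvVec {ι : Type*} [Fintype ι] [DecidableEq ι]
    (g ginv : (ι → ℝ) → Matrix ι ι ℝ) (p : ι → ℝ) (v w u : ι → ℝ) : ι → ℝ :=
  fun l => ∑ i, ∑ j, ∑ k, v i * w j * u k * curvOp g ginv i j k l p

/-- The polarized Jacobi operator `J(v,w)u = (1/2){R(u,v)w + R(u,w)v}`. -/
def jacobiVec {ι : Type*} [Fintype ι] [DecidableEq ι]
    (g ginv : (ι → ℝ) → Matrix ι ι ℝ) (p : ι → ℝ) (v w u : ι → ℝ) : ι → ℝ :=
  fun l => (1 / 2) * (curvVec g ginv p u v w l + curvVec g ginv p u w v l)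

/-- The Ricci tensor `Ric_{ij} = Tr (z ↦ R(z,∂_i)∂_j)`. -/
def ricci {ι : Type*} [Fintype ι] [DecidableEq ι]
    (g ginv : (ι → ℝ) → Matrix ι ι ℝ) (i j : ι) (p : ι → ℝ) : ℝ :=
  ∑ m, curvOp g ginv m i j m p

/-- The Ricci operator (Ricci tensor with one index raised by `g`), as a matrix:
`rho(∂_j) = ∑_i (ricciOp p) i j ∂_i`. -/
def ricciOp {ι : Type*} [Fintype ι] [DecidableEq ι]
    (g ginv : (ι → ℝ) → Matrix ι ι ℝ) (p : ι → ℝ) : Matrix ι ι ℝ :=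
  fun i j => ∑ m, ginv p i m * ricci g ginv m j p

/-- The (0,4) curvature tensor `R_{ijkl} = g(R(∂_i,∂_j)∂_k, ∂_l)`. -/
def curv4 {ι : Type*} [Fintype ι] [DecidableEq ι]
    (g ginv : (ι → ℝ) → Matrix ι ι ℝ) (i j k l : ι) (p : ι → ℝ) : ℝ :=
  ∑ m, curvOp g ginv i j k m p * g p m l

/-- The metric of Theorem 1.9 on `ℝ⁴`: `g(∂x₁,∂x₃) = g(∂x₂,∂x₄) = 1`,
`g(∂x₃,∂x₄) = s(x₂² - x₁²)/2`, `g(∂x₃,∂x₃) = s x₁x₂`, `g(∂x₄,∂x₄) = -s x₁x₂`. -/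
def gSym (s : ℝ) (p : Fin 4 → ℝ) : Matrix (Fin 4) (Fin 4) ℝ :=
  Matrix.of
    ![![0, 0, 1, 0],
      ![0, 0, 0, 1],
      ![1, 0, s * p 0 * p 1, s * ((p 1) ^ 2 - (p 0) ^ 2) / 2],
      ![0, 1, s * ((p 1) ^ 2 - (p 0) ^ 2) / 2, -(s * p 0 * p 1)]]

section PDlemmas
variable {ι : Type*} [Fintype ι] [DecidableEq ι] {i j : ι} {p : ι → ℝ}
  {f g : (ι → ℝ) → ℝ}

theorem pd_const (c : ℝ) : pd i (fun _ => c) p = 0 := by simp [pd]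

theorem pd_coord : pd i (fun q => q j) p = if j = i then 1 else 0 := by
  have h : (fun q : ι → ℝ => q j) = (ContinuousLinearMap.proj j : (ι → ℝ) →L[ℝ] ℝ) := rfl
  rw [pd, h, ContinuousLinearMap.fderiv]
  simp [Pi.single_apply]

theorem pd_add (hf : DifferentiableAt ℝ f p) (hg : DifferentiableAt ℝ g p) :
    pd i (fun q => f q + g q) p = pd i f p + pd i g p := by
  simp [pd, fderiv_fun_add hf hg]

theorem pd_sub (hf : DifferentiableAt ℝ f p) (hg : DifferentiableAt ℝ g p) :
    pd i (fun q => f q - g q) p = pd i f p - pd i g p := by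
  simp [pd, fderiv_fun_sub hf hg]

theorem pd_neg : pd i (fun q => -f q) p = -pd i f p := by
  simp [pd, fderiv_neg]

theorem pd_mul (hf : DifferentiableAt ℝ f p) (hg : DifferentiableAt ℝ g p) :
    pd i (fun q => f q * g q) p = pd i f p * g p + f p * pd i g p := by
  simp [pd, fderiv_fun_mul hf hg]; ring

theorem pd_sq (hf : DifferentiableAt ℝ f p) :
    pd i (fun q => f q ^ 2) p = 2 * f p * pd i f p := by
  simp only [pow_two]
  rw [pd_mul hf hf]; ring

theorem pd_div_const (c : ℝ) (hf : DifferentiableAt ℝ f p) :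
    pd i (fun q => f q / c) p = pd i f p / c := by
  simp [pd, div_eq_mul_inv, fderiv_mul_const hf]; ring

end PDlemmas

def Ginv (s : ℝ) (p : Fin 4 → ℝ) : Matrix (Fin 4) (Fin 4) ℝ :=
  Matrix.of
    ![![-(s * p 0 * p 1), -(s * ((p 1) ^ 2 - (p 0) ^ 2) / 2), 1, 0],
      ![-(s * ((p 1) ^ 2 - (p 0) ^ 2) / 2), s * p 0 * p 1, 0, 1],
      ![1, 0, 0, 0],
      ![0, 1, 0, 0]]

theorem Ginv_mul (s : ℝ) (p : Fin 4 → ℝ) : Ginv s p * gSym s p = 1 := by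
  ext i j
  fin_cases i <;> fin_cases j <;>
    simp [Ginv, gSym, Matrix.mul_apply, Fin.sum_univ_four, Matrix.one_apply] <;> ring
def Γe (s : ℝ) : Fin 4 → Fin 4 → Fin 4 → (Fin 4 → ℝ) → ℝ :=
  ![![![(fun _ : Fin 4 → ℝ => (0:ℝ)), (fun _ : Fin 4 → ℝ => (0:ℝ)), (fun q : Fin 4 → ℝ => s * q 1 / 2), (fun q : Fin 4 → ℝ => -(s * q 0 / 2))],
    ![(fun _ : Fin 4 → ℝ => (0:ℝ)), (fun _ : Fin 4 → ℝ => (0:ℝ)), (fun q : Fin 4 → ℝ => s * q 0 / 2), (fun q : Fin 4 → ℝ => s * q 1 / 2)],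
    ![(fun q : Fin 4 → ℝ => s * q 1 / 2), (fun q : Fin 4 → ℝ => s * q 0 / 2), (fun q : Fin 4 → ℝ => (s * q 1 / 2 * (s * q 0 * q 1) + s * q 0 / 2 * (s * (q 1 ^ 2 - q 0 ^ 2) / 2))), (fun q : Fin 4 → ℝ => (s * (q 1 ^ 2 - q 0 ^ 2) / 2 * (s * q 1 / 2) - s * q 0 * q 1 * (s * q 0 / 2)))],
    ![(fun q : Fin 4 → ℝ => -(s * q 0 / 2)), (fun q : Fin 4 → ℝ => s * q 1 / 2), (fun q : Fin 4 → ℝ => (s * (q 1 ^ 2 - q 0 ^ 2) / 2 * (s * q 1 / 2) - s * q 0 * q 1 * (s * q 0 / 2))), (fun q : Fin 4 → ℝ => -((s * q 1 / 2 * (s * q 0 * q 1) + s * q 0 / 2 * (s * (q 1 ^ 2 - q 0 ^ 2) / 2))))]],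
  ![![(fun _ : Fin 4 → ℝ => (0:ℝ)), (fun _ : Fin 4 → ℝ => (0:ℝ)), (fun q : Fin 4 → ℝ => -(s * q 0 / 2)), (fun q : Fin 4 → ℝ => -(s * q 1 / 2))],
    ![(fun _ : Fin 4 → ℝ => (0:ℝ)), (fun _ : Fin 4 → ℝ => (0:ℝ)), (fun q : Fin 4 → ℝ => s * q 1 / 2), (fun q : Fin 4 → ℝ => -(s * q 0 / 2))],
    ![(fun q : Fin 4 → ℝ => -(s * q 0 / 2)), (fun q : Fin 4 → ℝ => s * q 1 / 2), (fun q : Fin 4 → ℝ => (s * (q 1 ^ 2 - q 0 ^ 2) / 2 * (s * q 1 / 2) - s * q 0 * q 1 * (s * q 0 / 2))), (fun q : Fin 4 → ℝ => -((s * q 1 / 2 * (s * q 0 * q 1) + s * q 0 / 2 * (s * (q 1 ^ 2 - q 0 ^ 2) / 2))))],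
    ![(fun q : Fin 4 → ℝ => -(s * q 1 / 2)), (fun q : Fin 4 → ℝ => -(s * q 0 / 2)), (fun q : Fin 4 → ℝ => -((s * q 1 / 2 * (s * q 0 * q 1) + s * q 0 / 2 * (s * (q 1 ^ 2 - q 0 ^ 2) / 2)))), (fun q : Fin 4 → ℝ => -((s * (q 1 ^ 2 - q 0 ^ 2) / 2 * (s * q 1 / 2) - s * q 0 * q 1 * (s * q 0 / 2))))]],
  ![![(fun _ : Fin 4 → ℝ => (0:ℝ)), (fun _ : Fin 4 → ℝ => (0:ℝ)), (fun _ : Fin 4 → ℝ => (0:ℝ)), (fun _ : Fin 4 → ℝ => (0:ℝ))],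
    ![(fun _ : Fin 4 → ℝ => (0:ℝ)), (fun _ : Fin 4 → ℝ => (0:ℝ)), (fun _ : Fin 4 → ℝ => (0:ℝ)), (fun _ : Fin 4 → ℝ => (0:ℝ))],
    ![(fun _ : Fin 4 → ℝ => (0:ℝ)), (fun _ : Fin 4 → ℝ => (0:ℝ)), (fun q : Fin 4 → ℝ => -(s * q 1 / 2)), (fun q : Fin 4 → ℝ => s * q 0 / 2)],
    ![(fun _ : Fin 4 → ℝ => (0:ℝ)), (fun _ : Fin 4 → ℝ => (0:ℝ)), (fun q : Fin 4 → ℝ => s * q 0 / 2), (fun q : Fin 4 → ℝ => s * q 1 / 2)]],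
  ![![(fun _ : Fin 4 → ℝ => (0:ℝ)), (fun _ : Fin 4 → ℝ => (0:ℝ)), (fun _ : Fin 4 → ℝ => (0:ℝ)), (fun _ : Fin 4 → ℝ => (0:ℝ))],
    ![(fun _ : Fin 4 → ℝ => (0:ℝ)), (fun _ : Fin 4 → ℝ => (0:ℝ)), (fun _ : Fin 4 → ℝ => (0:ℝ)), (fun _ : Fin 4 → ℝ => (0:ℝ))],
    ![(fun _ : Fin 4 → ℝ => (0:ℝ)), (fun _ : Fin 4 → ℝ => (0:ℝ)), (fun q : Fin 4 → ℝ => -(s * q 0 / 2)), (fun q : Fin 4 → ℝ => -(s * q 1 / 2))],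
    ![(fun _ : Fin 4 → ℝ => (0:ℝ)), (fun _ : Fin 4 → ℝ => (0:ℝ)), (fun q : Fin 4 → ℝ => -(s * q 1 / 2)), (fun q : Fin 4 → ℝ => s * q 0 / 2)]]]


set_option maxHeartbeats 4000000 in
theorem christoffel_eq (s : ℝ) (k i j : Fin 4) :
    christoffel (gSym s) (Ginv s) k i j = Γe s k i j := by
  funext q
  fin_cases k <;> fin_cases i <;> fin_cases j <;>
  · simp [christoffel, Fin.sum_univ_four, Γe, Ginv, gSym, Matrix.vecHead, Matrix.vecTail]
    try simp (disch := fun_prop) only [pd_const, pd_coord, pd_add, pd_sub, pd_neg, pd_mul,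
      pd_sq, pd_div_const, Fin.reduceEq, reduceIte]
    try norm_num
    try ring

def RicE (s : ℝ) (p : Fin 4 → ℝ) : Matrix (Fin 4) (Fin 4) ℝ :=
  Matrix.of
    ![![0, 0, 0, -s],
      ![0, 0, s, 0],
      ![0, s, s ^ 2 * ((p 1) ^ 2 - (p 0) ^ 2) / 2, -(s ^ 2 * p 0 * p 1)],
      ![-s, 0, -(s ^ 2 * p 0 * p 1), -(s ^ 2 * ((p 1) ^ 2 - (p 0) ^ 2) / 2)]]

set_option maxHeartbeats 4000000 in
theorem ricci_eq (s : ℝ) (i j : Fin 4) (p : Fin 4 → ℝ) :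
    ricci (gSym s) (Ginv s) i j p = RicE s p i j := by
  fin_cases i <;> fin_cases j <;>
  · simp only [ricci, curvOp, Fin.sum_univ_four, christoffel_eq]
    simp [Γe, RicE, Matrix.vecHead, Matrix.vecTail]
    try simp (disch := fun_prop) only [pd_const, pd_coord, pd_add, pd_sub, pd_neg, pd_mul,
      pd_sq, pd_div_const, Fin.reduceEq, reduceIte]
    try norm_num
    try ring

set_option maxHeartbeats 1000000 in
theorem ricciOp_eq (s : ℝ) (p : Fin 4 → ℝ) :
    ricciOp (gSym s) (Ginv s) p =
      Matrix.of
        ![![0, s, 0, 0],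
          ![-s, 0, 0, 0],
          ![0, 0, 0, -s],
          ![0, 0, s, 0]] := by
  ext i j
  fin_cases i <;> fin_cases j <;>
  · simp [ricciOp, Fin.sum_univ_four, ricci_eq, RicE, Ginv, Matrix.vecHead, Matrix.vecTail]
    try ring

/-- For the metric `gSym s`, the Ricci operator satisfies
`rho(∂x₁) = -s∂x₂`, `rho(∂x₂) = s∂x₁`, `rho(∂x₃) = s∂x₄`, `rho(∂x₄) = -s∂x₃`;
in particular `rho² = -s²·id`, so for `s = 1` the Ricci operator is an almost
complex structure. -/
theorem stmt_17 (s : ℝ)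
    (ginv : (Fin 4 → ℝ) → Matrix (Fin 4) (Fin 4) ℝ)
    (hginv : ∀ p, gSym s p * ginv p = 1 ∧ ginv p * gSym s p = 1) :
    ∀ p : Fin 4 → ℝ,
      ricciOp (gSym s) ginv p =
        Matrix.of
          ![![0, s, 0, 0],
            ![-s, 0, 0, 0],
            ![0, 0, 0, -s],
            ![0, 0, s, 0]] ∧
      ricciOp (gSym s) ginv p ^ 2 = -(s ^ 2) • (1 : Matrix (Fin 4) (Fin 4) ℝ) := by
  have hg : ginv = Ginv s := by
    funext p
    calc ginv p = 1 * ginv p := (Matrix.one_mul _).symm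
      _ = (Ginv s p * gSym s p) * ginv p := by rw [Ginv_mul]
      _ = Ginv s p * (gSym s p * ginv p) := Matrix.mul_assoc _ _ _
      _ = Ginv s p * 1 := by rw [(hginv p).1]
      _ = Ginv s p := Matrix.mul_one _
  subst hg
  intro p
  refine ⟨ricciOp_eq s p, ?_⟩
  rw [ricciOp_eq s p]
  ext i j
  fin_cases i <;> fin_cases j <;>
  · simp [pow_two, Matrix.mul_apply, Fin.sum_univ_four, Matrix.one_apply,
      Matrix.vecHead, Matrix.vecTail]
    try ring
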